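/- Let s and e be composable labelled transition systems, s' ∈ Q_s, e' ∈ Q_e and σ ∈ Utraces(s ‖ e). If s and e are mutually accepting, then s ‖ e ⟹σ s' ‖ e' if and only if s ⟹(σ↾L_s^δ) s' and e ⟹(σ↾L_e^δ) e'. -/

import Mathlib

/-- Visible labels extended with the quiescence label `δ`. -/
inductive DLabel (A : Type) where
  | act : A → DLabel A
  | δ : DLabel A
deriving DecidableEq

/-- A labelled transition system with state type `S` and label type `A`.
`T p none p'` is an internal (τ) transition; `T p (some a) p'` a visible one.
The set of states is the whole type `S`; the initial state is `q0`. -/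
structure LTS (S : Type) (A : Type) where
  T : S → Option A → S → Prop
  I : Set A
  U : Set A
  q0 : S

namespace LTS

variable {S E F A : Type}

/-- The set of visible labels. -/
def L (s : LTS S A) : Set A := s.I ∪ s.U

/-- Well-formedness of an LTS: countably many states and labels, inputs and
outputs disjoint, and visible transitions labelled in `I ∪ U`. -/
def WF (s : LTS S A) : Prop :=
  Countable S ∧ s.I.Countable ∧ s.U.Countable ∧ Disjoint s.I s.U ∧
    ∀ p a q, s.T p (some a) q → a ∈ s.L

/-- A state is quiescent if it has no output transitions and no τ-transitions. -/
def quiescent (s : LTS S A) (p : S) : Prop :=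
  (∀ x ∈ s.U, ∀ p', ¬ s.T p (some x) p') ∧ (∀ p', ¬ s.T p none p')

/-- Single-step transition relation for δ-extended labels: `δ` is a self-loop
on quiescent states. -/
def dstep (s : LTS S A) (p : S) : DLabel A → S → Prop
  | .act a, p' => s.T p (some a) p'
  | .δ, p' => p = p' ∧ s.quiescent p

/-- `eps p p'`: `p'` is reachable from `p` by finitely many τ-transitions. -/
def eps (s : LTS S A) : S → S → Prop :=
  Relation.ReflTransGen (fun p q => s.T p none q)

/-- Weak transition relation `p ⟹σ p'` over δ-extended traces. -/
def wtrans (s : LTS S A) : S → List (DLabel A) → S → Prop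
  | p, [], p' => s.eps p p'
  | p, ℓ :: σ, p'' => ∃ p1 p2, s.eps p p1 ∧ s.dstep p1 ℓ p2 ∧ s.wtrans p2 σ p''

/-- The δ-extended label set `L^δ` as a set of `DLabel`s. -/
def Ld (s : LTS S A) : Set (DLabel A) := (DLabel.act '' s.L) ∪ {DLabel.δ}

/-- `Utraces s`: δ-extended traces of `s` (from the initial state) that never
pass through a state refusing a subsequent input of the trace. -/
def Utraces (s : LTS S A) : Set (List (DLabel A)) :=
  { σ | (∀ ℓ ∈ σ, ℓ ∈ s.Ld) ∧ (∃ p, s.wtrans s.q0 σ p) ∧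
      ∀ σ1 a σ2, σ = σ1 ++ DLabel.act a :: σ2 → a ∈ s.I →
        ∀ p, s.wtrans s.q0 σ1 p → ∃ p', s.wtrans p [DLabel.act a] p' }

/-- `out p`: the outputs (including quiescence δ) enabled in state `p`. -/
def out (s : LTS S A) (p : S) : Set (DLabel A) :=
  { x | match x with
        | .act a => a ∈ s.U ∧ ∃ p', s.T p (some a) p'
        | .δ => s.quiescent p }

/-- `out` of a set of states. -/
def outSet (s : LTS S A) (P : Set S) : Set (DLabel A) := ⋃ p ∈ P, s.out p

/-- `inp p`: the inputs weakly enabled in state `p`. -/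
def inp (s : LTS S A) (p : S) : Set A :=
  { a | a ∈ s.I ∧ ∃ p', s.wtrans p [DLabel.act a] p' }

/-- The states reached from the initial state after trace `σ`. -/
def after (s : LTS S A) (σ : List (DLabel A)) : Set S :=
  { p' | s.wtrans s.q0 σ p' }

/-- Input-enabledness: every input is weakly enabled in every state. -/
def IOTS (s : LTS S A) : Prop :=
  ∀ q : S, ∀ a ∈ s.I, ∃ q', s.wtrans q [DLabel.act a] q'

/-- Two LTSs are composable iff their output sets are disjoint. -/
def Composable (s : LTS S A) (e : LTS E A) : Prop := Disjoint s.U e.U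

/-- Parallel composition of two LTSs: synchronisation on shared labels,
interleaving on non-shared labels and τ. -/
def par (s : LTS S A) (e : LTS E A) : LTS (S × E) A where
  I := (s.I \ e.U) ∪ (e.I \ s.U)
  U := s.U ∪ e.U
  q0 := (s.q0, e.q0)
  T := fun x ℓ y =>
    (s.T x.1 ℓ y.1 ∧ y.2 = x.2 ∧ (ℓ = none ∨ ∃ a ∈ s.L, ℓ = some a) ∧
      ∀ a ∈ e.L, ℓ ≠ some a) ∨
    (e.T x.2 ℓ y.2 ∧ y.1 = x.1 ∧ (ℓ = none ∨ ∃ a ∈ e.L, ℓ = some a) ∧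
      ∀ a ∈ s.L, ℓ ≠ some a) ∨
    (∃ a ∈ s.L ∩ e.L, ℓ = some a ∧ s.T x.1 (some a) y.1 ∧ e.T x.2 (some a) y.2)

/-- The uioco implementation relation. -/
def uioco (i : LTS E A) (s : LTS S A) : Prop :=
  ∀ σ ∈ s.Utraces, i.outSet (i.after σ) ⊆ s.outSet (s.after σ)

/-- `s.Accepts e`: along every Utrace of `s ‖ e`, every output of `e` that is an
input label of `s` is actually accepted by `s` and is an output of `e`. -/
def Accepts (s : LTS S A) (e : LTS E A) : Prop :=
  ∀ σ ∈ (s.par e).Utraces, ∀ p q, (s.par e).wtrans (s.par e).q0 σ (p, q) →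
    ∀ a, DLabel.act a ∈ e.out q → a ∈ s.I → a ∈ s.inp p ∧ a ∈ e.U

/-- Mutual acceptance. -/
def MutuallyAccepts (s : LTS S A) (e : LTS E A) : Prop := s.Accepts e ∧ e.Accepts s

/-- Isomorphism of LTSs: equal label sets and a bijection on states preserving
the initial state and all transitions (including τ and δ). -/
def Isomorphic (s : LTS S A) (s' : LTS E A) : Prop :=
  s.I = s'.I ∧ s.U = s'.U ∧ ∃ f : S ≃ E, f s.q0 = s'.q0 ∧
    (∀ p p' ℓ, s.T p ℓ p' ↔ s'.T (f p) ℓ (f p')) ∧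
    (∀ p p', s.dstep p DLabel.δ p' ↔ s'.dstep (f p) DLabel.δ (f p'))

open Classical in
/-- Projection of a trace onto a set of labels. -/
noncomputable def proj : List (DLabel A) → Set (DLabel A) → List (DLabel A)
  | [], _ => []
  | ℓ :: σ, 𝓛 => if ℓ ∈ 𝓛 then ℓ :: proj σ 𝓛 else proj σ 𝓛

end LTS

namespace LTS

variable {S E A : Type}

open Classical in
lemma proj_nil {𝓛 : Set (DLabel A)} : LTS.proj ([] : List (DLabel A)) 𝓛 = [] := rfl

open Classical in
lemma proj_cons {ℓ : DLabel A} {σ : List (DLabel A)} {𝓛 : Set (DLabel A)} :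
    LTS.proj (ℓ :: σ) 𝓛 = if ℓ ∈ 𝓛 then ℓ :: LTS.proj σ 𝓛 else LTS.proj σ 𝓛 := rfl

lemma mem_Ld_act {s : LTS S A} {a : A} : DLabel.act a ∈ s.Ld ↔ a ∈ s.L := by
  simp [Ld]

lemma mem_Ld_delta {s : LTS S A} : DLabel.δ ∈ s.Ld := Or.inr rfl

lemma wtrans_eps_left {u : LTS S A} {p q r : S} {σ : List (DLabel A)}
    (h : u.eps p q) (h2 : u.wtrans q σ r) : u.wtrans p σ r := by
  cases σ with
  | nil => exact h.trans h2
  | cons ℓ σ => obtain ⟨m1, m2, a, b, c⟩ := h2; exact ⟨m1, m2, h.trans a, b, c⟩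

lemma wtrans_append {u : LTS S A} {p q r : S} {σ1 σ2 : List (DLabel A)}
    (h1 : u.wtrans p σ1 q) (h2 : u.wtrans q σ2 r) : u.wtrans p (σ1 ++ σ2) r := by
  induction σ1 generalizing p with
  | nil => exact wtrans_eps_left h1 h2
  | cons ℓ σ ih => obtain ⟨m1, m2, a, b, c⟩ := h1; exact ⟨m1, m2, a, b, ih c⟩

lemma wtrans_append_inv {u : LTS S A} {p r : S} {σ1 σ2 : List (DLabel A)}
    (h : u.wtrans p (σ1 ++ σ2) r) : ∃ q, u.wtrans p σ1 q ∧ u.wtrans q σ2 r := by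
  induction σ1 generalizing p with
  | nil => exact ⟨p, Relation.ReflTransGen.refl, h⟩
  | cons ℓ σ ih =>
    obtain ⟨m1, m2, a, b, c⟩ := h
    obtain ⟨q, d, e2⟩ := ih c
    exact ⟨q, ⟨m1, m2, a, b, d⟩, e2⟩

lemma Utraces_prefix {u : LTS S A} {σ1 σ2 : List (DLabel A)}
    (h : σ1 ++ σ2 ∈ u.Utraces) : σ1 ∈ u.Utraces := by
  obtain ⟨h1, ⟨x, h2⟩, h3⟩ := h
  refine ⟨fun ℓ hℓ => h1 ℓ (List.mem_append_left _ hℓ), ?_, ?_⟩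
  · obtain ⟨m, hm, _⟩ := wtrans_append_inv h2; exact ⟨m, hm⟩
  · intro a1 a a2 heq ha p hp
    refine h3 a1 a (a2 ++ σ2) ?_ ha p hp
    rw [heq]; simp

lemma par_L_sub {s : LTS S A} {e : LTS E A} : (s.par e).L ⊆ s.L ∪ e.L := by
  rintro x ((⟨h, -⟩ | ⟨h, -⟩) | (h | h))
  · exact Or.inl (Or.inl h)
  · exact Or.inr (Or.inl h)
  · exact Or.inl (Or.inr h)
  · exact Or.inr (Or.inr h)

lemma par_eps_fst {s : LTS S A} {e : LTS E A} {x y : S × E} (h : (s.par e).eps x y) :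
    s.eps x.1 y.1 ∧ e.eps x.2 y.2 := by
  induction h with
  | refl => exact ⟨Relation.ReflTransGen.refl, Relation.ReflTransGen.refl⟩
  | tail h1 h2 ih =>
    rcases h2 with ⟨ht, h2, -, -⟩ | ⟨ht, h2, -, -⟩ | ⟨a, -, h3, -⟩
    · exact ⟨ih.1.tail ht, h2 ▸ ih.2⟩
    · exact ⟨h2 ▸ ih.1, ih.2.tail ht⟩
    · cases h3

lemma eps_par_of {s : LTS S A} {e : LTS E A} {p p' : S} {q q' : E}
    (h1 : s.eps p p') (h2 : e.eps q q') : (s.par e).eps (p, q) (p', q') := by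
  have hs : (s.par e).eps (p, q) (p', q) := by
    induction h1 with
    | refl => exact Relation.ReflTransGen.refl
    | tail a b ih => exact ih.tail (Or.inl ⟨b, rfl, Or.inl rfl, by simp⟩)
  have he : (s.par e).eps (p', q) (p', q') := by
    induction h2 with
    | refl => exact Relation.ReflTransGen.refl
    | tail a b ih => exact ih.tail (Or.inr (Or.inl ⟨b, rfl, Or.inl rfl, by simp⟩))
  exact hs.trans he

lemma parT_act_inv {s : LTS S A} {e : LTS E A} {x y : S × E} {a : A}
    (h : (s.par e).T x (some a) y) :
    (s.T x.1 (some a) y.1 ∧ y.2 = x.2 ∧ a ∈ s.L ∧ a ∉ e.L) ∨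
    (e.T x.2 (some a) y.2 ∧ y.1 = x.1 ∧ a ∈ e.L ∧ a ∉ s.L) ∨
    (a ∈ s.L ∧ a ∈ e.L ∧ s.T x.1 (some a) y.1 ∧ e.T x.2 (some a) y.2) := by
  rcases h with ⟨h1, h2, h3, h4⟩ | ⟨h1, h2, h3, h4⟩ | ⟨b, ⟨hb1, hb2⟩, heq, ht1, ht2⟩
  · refine Or.inl ⟨h1, h2, ?_, fun hae => h4 a hae rfl⟩
    rcases h3 with h | ⟨b, hb, heq⟩
    · cases h
    · injection heq with h; subst h; exact hb
  · refine Or.inr (Or.inl ⟨h1, h2, ?_, fun hae => h4 a hae rfl⟩)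
    rcases h3 with h | ⟨b, hb, heq⟩
    · cases h
    · injection heq with h; subst h; exact hb
  · injection heq with h; subst h
    exact Or.inr (Or.inr ⟨hb1, hb2, ht1, ht2⟩)

lemma parT_left {s : LTS S A} {e : LTS E A} {p p' : S} {q : E} {a : A}
    (ht : s.T p (some a) p') (ha : a ∈ s.L) (hne : a ∉ e.L) :
    (s.par e).T (p, q) (some a) (p', q) :=
  Or.inl ⟨ht, rfl, Or.inr ⟨a, ha, rfl⟩, fun b hb h => hne (by injection h with h; exact h ▸ hb)⟩

lemma parT_right {s : LTS S A} {e : LTS E A} {p : S} {q q' : E} {a : A}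
    (ht : e.T q (some a) q') (ha : a ∈ e.L) (hne : a ∉ s.L) :
    (s.par e).T (p, q) (some a) (p, q') :=
  Or.inr (Or.inl ⟨ht, rfl, Or.inr ⟨a, ha, rfl⟩,
    fun b hb h => hne (by injection h with h; exact h ▸ hb)⟩)

lemma quiescent_par_of {s : LTS S A} {e : LTS E A} {p : S} {q : E}
    (hq1 : s.quiescent p) (hq2 : e.quiescent q) : (s.par e).quiescent (p, q) := by
  constructor
  · rintro x hx y (⟨ht, -, h3, h4⟩ | ⟨ht, -, h3, h4⟩ | ⟨a, ⟨ha1, ha2⟩, heq, hts, hte⟩)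
    · have hxs : x ∈ s.U := by
        rcases hx with hx | hx
        · exact hx
        · exact absurd rfl (h4 x (Set.mem_union_right _ hx))
      exact hq1.1 x hxs y.1 ht
    · have hxe : x ∈ e.U := by
        rcases hx with hx | hx
        · exact absurd rfl (h4 x (Set.mem_union_right _ hx))
        · exact hx
      exact hq2.1 x hxe y.2 ht
    · injection heq with h; subst h
      rcases hx with hx | hx
      · exact hq1.1 x hx y.1 hts
      · exact hq2.1 x hx y.2 hte
  · rintro y (⟨ht, -, -, -⟩ | ⟨ht, -, -, -⟩ | ⟨a, -, heq, -⟩)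
    · exact hq1.2 y.1 ht
    · exact hq2.2 y.2 ht
    · cases heq

lemma parT_swap {s : LTS S A} {e : LTS E A} {x y : S × E} {ℓ : Option A}
    (h : (s.par e).T x ℓ y) : (e.par s).T (x.2, x.1) ℓ (y.2, y.1) := by
  rcases h with ⟨h1, h2, h3, h4⟩ | ⟨h1, h2, h3, h4⟩ | ⟨a, ⟨ha1, ha2⟩, h1, h2, h3⟩
  · exact Or.inr (Or.inl ⟨h1, h2, h3, h4⟩)
  · exact Or.inl ⟨h1, h2, h3, h4⟩
  · exact Or.inr (Or.inr ⟨a, ⟨ha2, ha1⟩, h1, h3, h2⟩)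

lemma par_eps_swap {s : LTS S A} {e : LTS E A} {x y : S × E}
    (h : (s.par e).eps x y) : (e.par s).eps (x.2, x.1) (y.2, y.1) := by
  induction h with
  | refl => exact Relation.ReflTransGen.refl
  | tail h1 h2 ih => exact ih.tail (parT_swap h2)

lemma par_quiescent_swap {s : LTS S A} {e : LTS E A} {x : S × E}
    (h : (s.par e).quiescent x) : (e.par s).quiescent (x.2, x.1) := by
  constructor
  · intro a ha y hT
    have ha' : a ∈ (s.par e).U := by
      rcases ha with h' | h'
      · exact Set.mem_union_right _ h'
      · exact Set.mem_union_left _ h'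
    exact h.1 a ha' (y.2, y.1) (parT_swap hT)
  · intro y hT
    exact h.2 (y.2, y.1) (parT_swap hT)

lemma par_dstep_swap {s : LTS S A} {e : LTS E A} {x y : S × E} {ℓ : DLabel A}
    (h : (s.par e).dstep x ℓ y) : (e.par s).dstep (x.2, x.1) ℓ (y.2, y.1) := by
  cases ℓ with
  | act a => exact parT_swap h
  | δ => exact ⟨by rw [h.1], par_quiescent_swap h.2⟩

lemma par_wtrans_swap {s : LTS S A} {e : LTS E A} {x y : S × E} {σ : List (DLabel A)}
    (h : (s.par e).wtrans x σ y) : (e.par s).wtrans (x.2, x.1) σ (y.2, y.1) := by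
  induction σ generalizing x with
  | nil => exact par_eps_swap h
  | cons ℓ σ ih =>
    obtain ⟨m1, m2, h1, h2, h3⟩ := h
    exact ⟨(m1.2, m1.1), (m2.2, m2.1), par_eps_swap h1, par_dstep_swap h2, ih h3⟩

lemma par_L_swap {s : LTS S A} {e : LTS E A} : (e.par s).L = (s.par e).L := by
  simp only [L, par]
  rw [Set.union_comm (e.I \ s.U), Set.union_comm e.U]

lemma par_Ld_swap {s : LTS S A} {e : LTS E A} : (e.par s).Ld = (s.par e).Ld := by
  rw [Ld, Ld, par_L_swap]

lemma par_Utraces_swap {s : LTS S A} {e : LTS E A} {σ : List (DLabel A)}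
    (h : σ ∈ (s.par e).Utraces) : σ ∈ (e.par s).Utraces := by
  obtain ⟨h1, ⟨x, h2⟩, h3⟩ := h
  refine ⟨fun ℓ hℓ => par_Ld_swap ▸ h1 ℓ hℓ, ⟨(x.2, x.1), par_wtrans_swap h2⟩, ?_⟩
  intro σ1 a σ2 heq ha p hp
  have ha' : a ∈ (s.par e).I := by
    rcases ha with h' | h'
    · exact Or.inr h'
    · exact Or.inl h'
  obtain ⟨p', hp'⟩ := h3 σ1 a σ2 heq ha' (p.2, p.1) (par_wtrans_swap hp)
  exact ⟨(p'.2, p'.1), par_wtrans_swap hp'⟩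

lemma step_of_inp_no_tau {u : LTS S A} {p : S} {a : A}
    (h : a ∈ u.inp p) (hτ : ∀ p', ¬ u.T p none p') : ∃ p', u.T p (some a) p' := by
  obtain ⟨-, p', m1, m2, h1, h2, -⟩ := h
  rcases h1.cases_head with rfl | ⟨c, hc, -⟩
  · exact ⟨m2, h2⟩
  · exact absurd hc (hτ c)

lemma quiescent_of_par_quiescent_fst {s : LTS S A} {e : LTS E A} {p : S} {q : E}
    (hq : (s.par e).quiescent (p, q))
    (hin : ∀ x ∈ s.U, (∃ p2, s.T p (some x) p2) → x ∈ e.L → ∃ q2, e.T q (some x) q2) :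
    s.quiescent p := by
  constructor
  · intro x hx p2 ht
    by_cases hxe : x ∈ e.L
    · obtain ⟨q2, hq2⟩ := hin x hx ⟨p2, ht⟩ hxe
      exact hq.1 x (Set.mem_union_left _ hx) (p2, q2)
        (Or.inr (Or.inr ⟨x, ⟨Set.mem_union_right _ hx, hxe⟩, rfl, ht, hq2⟩))
    · exact hq.1 x (Set.mem_union_left _ hx) (p2, q)
        (parT_left ht (Set.mem_union_right _ hx) hxe)
  · intro p2 ht
    exact hq.2 (p2, q) (Or.inl ⟨ht, rfl, Or.inl rfl, by simp⟩)

lemma wtrans_par_proj {s : LTS S A} {e : LTS E A} (hc : LTS.Composable s e)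
    (hma : s.MutuallyAccepts e) {s' : S} {e' : E} :
    ∀ (σ σ0 : List (DLabel A)) (p : S) (q : E),
      σ0 ++ σ ∈ (s.par e).Utraces →
      (s.par e).wtrans (s.par e).q0 σ0 (p, q) →
      (s.par e).wtrans (p, q) σ (s', e') →
      s.wtrans p (LTS.proj σ s.Ld) s' ∧ e.wtrans q (LTS.proj σ e.Ld) e' := by
  intro σ
  induction σ with
  | nil =>
    intro σ0 p q _ _ h
    exact par_eps_fst h
  | cons ℓ σ' ih =>
    intro σ0 p q hU h0 h
    obtain ⟨m1, m2, h1, h2, h3⟩ := h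
    have he1 := par_eps_fst h1
    have h0' : (s.par e).wtrans (s.par e).q0 (σ0 ++ [ℓ]) m2 :=
      wtrans_append h0 ⟨m1, m2, h1, h2, Relation.ReflTransGen.refl⟩
    have hU' : (σ0 ++ [ℓ]) ++ σ' ∈ (s.par e).Utraces := by
      rw [List.append_assoc]; simpa using hU
    have ihm := ih (σ0 ++ [ℓ]) m2.1 m2.2 hU' h0' h3
    cases ℓ with
    | act a =>
      rcases parT_act_inv h2 with ⟨ht, hq2, haL, hane⟩ | ⟨ht, hq2, haL, hane⟩ |
          ⟨haS, haE, ht1, ht2⟩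
      · rw [proj_cons, if_pos (mem_Ld_act.mpr haL), proj_cons,
          if_neg (fun hh => hane (mem_Ld_act.mp hh))]
        refine ⟨⟨m1.1, m2.1, he1.1, ht, ihm.1⟩, wtrans_eps_left he1.2 ?_⟩
        rw [← hq2]; exact ihm.2
      · rw [proj_cons, if_neg (fun hh => hane (mem_Ld_act.mp hh)), proj_cons,
          if_pos (mem_Ld_act.mpr haL)]
        refine ⟨wtrans_eps_left he1.1 ?_, ⟨m1.2, m2.2, he1.2, ht, ihm.2⟩⟩
        rw [← hq2]; exact ihm.1
      · rw [proj_cons, if_pos (mem_Ld_act.mpr haS), proj_cons,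
          if_pos (mem_Ld_act.mpr haE)]
        exact ⟨⟨m1.1, m2.1, he1.1, ht1, ihm.1⟩, ⟨m1.2, m2.2, he1.2, ht2, ihm.2⟩⟩
    | δ =>
      obtain ⟨hm12, hqp⟩ := h2
      have hw1 : (s.par e).wtrans (s.par e).q0 σ0 m1 := by
        have := wtrans_append h0 (σ2 := []) h1
        simpa using this
      have hσ0 : σ0 ∈ (s.par e).Utraces := Utraces_prefix hU
      have hτs : ∀ p', ¬ s.T m1.1 none p' := fun p' hh =>
        hqp.2 (p', m1.2) (Or.inl ⟨hh, rfl, Or.inl rfl, by simp⟩)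
      have hτe : ∀ q', ¬ e.T m1.2 none q' := fun q' hh =>
        hqp.2 (m1.1, q') (Or.inr (Or.inl ⟨hh, rfl, Or.inl rfl, by simp⟩))
      have hqs : s.quiescent m1.1 := by
        refine quiescent_of_par_quiescent_fst (p := m1.1) (q := m1.2) (by simpa using hqp) ?_
        intro x hx hex hxL
        have hxI : x ∈ e.I := by
          rcases hxL with h' | h'
          · exact h'
          · exact absurd h' (hc.subset_compl_right hx)
        have hout : DLabel.act x ∈ s.out m1.1 := ⟨hx, hex⟩
        have := hma.2 σ0 (par_Utraces_swap hσ0) m1.2 m1.1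
          (par_wtrans_swap hw1) x hout hxI
        exact step_of_inp_no_tau this.1 hτe
      have hqe : e.quiescent m1.2 := by
        have hq' : (e.par s).quiescent (m1.2, m1.1) := par_quiescent_swap hqp
        refine quiescent_of_par_quiescent_fst hq' ?_
        intro x hx hex hxL
        have hxI : x ∈ s.I := by
          rcases hxL with h' | h'
          · exact h'
          · exact absurd hx (hc.subset_compl_right h')
        have hout : DLabel.act x ∈ e.out m1.2 := ⟨hx, hex⟩
        have := hma.1 σ0 hσ0 m1.1 m1.2 (by simpa using hw1) x hout hxI
        exact step_of_inp_no_tau this.1 hτs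
      rw [proj_cons, if_pos mem_Ld_delta, proj_cons, if_pos mem_Ld_delta]
      have ihm1 : s.wtrans m1.1 (LTS.proj σ' s.Ld) s' ∧
          e.wtrans m1.2 (LTS.proj σ' e.Ld) e' := by rw [hm12]; exact ihm
      exact ⟨⟨m1.1, m1.1, he1.1, ⟨rfl, hqs⟩, ihm1.1⟩,
        ⟨m1.2, m1.2, he1.2, ⟨rfl, hqe⟩, ihm1.2⟩⟩

lemma wtrans_par_of_proj {s : LTS S A} {e : LTS E A} {s' : S} {e' : E} :
    ∀ (σ : List (DLabel A)) (p : S) (q : E),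
      (∀ ℓ ∈ σ, ℓ ∈ (s.par e).Ld) →
      s.wtrans p (LTS.proj σ s.Ld) s' → e.wtrans q (LTS.proj σ e.Ld) e' →
      (s.par e).wtrans (p, q) σ (s', e') := by
  intro σ
  induction σ with
  | nil =>
    intro p q _ h1 h2
    exact eps_par_of h1 h2
  | cons ℓ σ' ih =>
    intro p q hlab h1 h2
    have hℓ := hlab ℓ List.mem_cons_self
    have hlab' : ∀ ℓ' ∈ σ', ℓ' ∈ (s.par e).Ld := fun ℓ' hh =>
      hlab ℓ' (List.mem_cons_of_mem _ hh)
    cases ℓ with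
    | δ =>
      rw [proj_cons, if_pos mem_Ld_delta] at h1 h2
      obtain ⟨p1, p2, ha, ⟨hp12, hqs⟩, hb⟩ := h1
      obtain ⟨q1, q2, ha', ⟨hq12, hqs'⟩, hb'⟩ := h2
      subst hp12; subst hq12
      exact ⟨(p1, q1), (p1, q1), eps_par_of ha ha', ⟨rfl, quiescent_par_of hqs hqs'⟩,
        ih p1 q1 hlab' hb hb'⟩
    | act a =>
      have haL : a ∈ s.L ∪ e.L := by
        rcases hℓ with ⟨b, hb, heq⟩ | hδ
        · injection heq with h; exact h ▸ par_L_sub hb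
        · cases hδ
      by_cases hsL : a ∈ s.L <;> by_cases heL : a ∈ e.L
      · rw [proj_cons, if_pos (mem_Ld_act.mpr hsL)] at h1
        rw [proj_cons, if_pos (mem_Ld_act.mpr heL)] at h2
        obtain ⟨p1, p2, ha1, ht1, hb1⟩ := h1
        obtain ⟨q1, q2, ha2, ht2, hb2⟩ := h2
        exact ⟨(p1, q1), (p2, q2), eps_par_of ha1 ha2,
          Or.inr (Or.inr ⟨a, ⟨hsL, heL⟩, rfl, ht1, ht2⟩), ih p2 q2 hlab' hb1 hb2⟩
      · rw [proj_cons, if_pos (mem_Ld_act.mpr hsL)] at h1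
        rw [proj_cons, if_neg (fun hh => heL (mem_Ld_act.mp hh))] at h2
        obtain ⟨p1, p2, ha1, ht1, hb1⟩ := h1
        exact ⟨(p1, q), (p2, q), eps_par_of ha1 Relation.ReflTransGen.refl,
          parT_left ht1 hsL heL, ih p2 q hlab' hb1 h2⟩
      · rw [proj_cons, if_neg (fun hh => hsL (mem_Ld_act.mp hh))] at h1
        rw [proj_cons, if_pos (mem_Ld_act.mpr heL)] at h2
        obtain ⟨q1, q2, ha2, ht2, hb2⟩ := h2
        exact ⟨(p, q1), (p, q2), eps_par_of Relation.ReflTransGen.refl ha2,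
          parT_right ht2 heL hsL, ih p q2 hlab' h1 hb2⟩
      · rcases haL with h' | h'
        · exact absurd h' hsL
        · exact absurd h' heL

end LTS


/-- for mutually accepting composable `s`, `e` and a Utrace `σ` of
`s ‖ e`, a weak transition of the composition along `σ` corresponds exactly to
weak transitions of the components along the projected traces. -/
theorem wtrans_par_iff_of_mutuallyAccepts {S E A : Type} (s : LTS S A) (e : LTS E A)
    (hs : s.WF) (he : e.WF) (hc : LTS.Composable s e)
    (s' : S) (e' : E) (σ : List (DLabel A)) (hσ : σ ∈ (s.par e).Utraces)
    (hma : s.MutuallyAccepts e) :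
    (s.par e).wtrans (s.par e).q0 σ (s', e') ↔
      s.wtrans s.q0 (LTS.proj σ s.Ld) s' ∧ e.wtrans e.q0 (LTS.proj σ e.Ld) e' := by
  constructor
  · intro h
    exact LTS.wtrans_par_proj hc hma σ [] s.q0 e.q0 hσ Relation.ReflTransGen.refl h
  · rintro ⟨h1, h2⟩
    exact LTS.wtrans_par_of_proj σ s.q0 e.q0 hσ.1 h1 h2
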